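/- Let (X, Y) be a compatible couple with X reflexive. A sequence (xₙ) in X ∩_j Y converges weakly in X ∩_j Y to x ∈ X ∩_j Y if and only if sup_{n} ‖xₙ‖_X < ∞ and jxₙ ⇀ jx weakly in Y. -/

import Mathlib

open Filter

/-- The pull-back intersection of a compatible couple `(X, Y, Z, e_X, e_Y)`, realized as the
submodule `{(x,y) | e_X x = e_Y y}` of `X × Y`; the intersection embedding
`j = e_Y⁻¹ e_X` is the second component. -/
def pbInter {X Y Z : Type*} [NormedAddCommGroup X] [NormedSpace ℝ X]
    [NormedAddCommGroup Y] [NormedSpace ℝ Y]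
    [AddCommGroup Z] [Module ℝ Z] [TopologicalSpace Z]
    (eX : X →L[ℝ] Z) (eY : Y →L[ℝ] Z) : Submodule ℝ (X × Y) where
  carrier := {q | eX q.1 = eY q.2}
  add_mem' := by
    intro a b ha hb
    simp only [Set.mem_setOf_eq, Prod.fst_add, Prod.snd_add, map_add] at *
    rw [ha, hb]
  zero_mem' := by simp
  smul_mem' := by
    intro c a ha
    simp only [Set.mem_setOf_eq, Prod.smul_fst, Prod.smul_snd, map_smul] at *
    rw [ha]

/-- Weak convergence of a sequence in a normed space, in terms of the continuous dual. -/
def WeakConv {E : Type*} [NormedAddCommGroup E] [NormedSpace ℝ E]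
    (u : ℕ → E) (x : E) : Prop :=
  ∀ f : StrongDual ℝ E, Tendsto (fun n => f (u n)) atTop (nhds (f x))

/-- A normed space is reflexive if the canonical inclusion into its double dual is onto. -/
def IsReflexiveSpace (E : Type*) [NormedAddCommGroup E] [NormedSpace ℝ E] : Prop :=
  Function.Surjective (NormedSpace.inclusionInDoubleDual ℝ E)

section auxlemmas
variable {α : Type*}

lemma mapClusterPt_prod_tendsto {X Y : Type*} [TopologicalSpace X] [TopologicalSpace Y]
    {f : α → X} {g : α → Y} {l : Filter α} {a : X} {b : Y}
    (hf : MapClusterPt a l f) (hg : Tendsto g l (nhds b)) :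
    MapClusterPt (a, b) l (fun n => (f n, g n)) := by
  rw [mapClusterPt_iff_frequently] at hf ⊢
  intro s hs
  rw [nhds_prod_eq, Filter.mem_prod_iff] at hs
  obtain ⟨U, hU, V, hV, hUV⟩ := hs
  exact ((hf U hU).and_eventually (hg hV)).mono fun n hn => hUV (Set.mk_mem_prod hn.1 hn.2)

lemma mapClusterPt_add_tendsto {f g : α → ℝ} {l : Filter α} {a b : ℝ}
    (hf : MapClusterPt a l f) (hg : Tendsto g l (nhds b)) :
    MapClusterPt (a + b) l (fun n => f n + g n) :=
  (mapClusterPt_prod_tendsto hf hg).continuousAt_comp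
    (f := fun p : ℝ × ℝ => p.1 + p.2) continuous_add.continuousAt

lemma mapClusterPt_unique {X : Type*} [TopologicalSpace X] [T2Space X] {f : α → X}
    {l : Filter α} [l.NeBot] {a b : X} (hf : MapClusterPt a l f)
    (hg : Tendsto f l (nhds b)) : a = b := by
  have h : ClusterPt a (nhds b) := hf.clusterPt.mono hg
  exact t2_iff_nhds.mp ‹_› h

lemma weakconv_bounded' {E : Type*} [NormedAddCommGroup E] [NormedSpace ℝ E] {u : ℕ → E}
    {x : E} (h : ∀ f : StrongDual ℝ E, Tendsto (fun n => f (u n)) atTop (nhds (f x))) :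
    ∃ M, ∀ n, ‖u n‖ ≤ M := by
  obtain ⟨C, hC⟩ := banach_steinhaus (𝕜 := ℝ) (𝕜₂ := ℝ)
    (g := fun n => NormedSpace.inclusionInDoubleDual ℝ E (u n)) (fun f => by
      obtain ⟨M, hM⟩ := ((h f).norm).bddAbove_range
      exact ⟨M, fun n => hM (Set.mem_range_self n)⟩)
  refine ⟨C, fun n => ?_⟩
  have hiso : ‖NormedSpace.inclusionInDoubleDual ℝ E (u n)‖ = ‖u n‖ :=
    (NormedSpace.inclusionInDoubleDualLi ℝ (E := E)).norm_map (u n)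
  rw [← hiso]; exact hC n

lemma submodule_separation {W : Type*} [NormedAddCommGroup W] [NormedSpace ℝ W]
    (p : Submodule ℝ W) (hp : IsClosed (p : Set W)) {z : W} (hz : z ∉ p) :
    ∃ F : W →L[ℝ] ℝ, (∀ y ∈ p, F y = 0) ∧ F z ≠ 0 := by
  obtain ⟨f, c, hfs, hc⟩ := geometric_hahn_banach_closed_point p.convex hp hz
  have h0 : (0:ℝ) < c := by simpa using hfs 0 p.zero_mem
  refine ⟨f, fun y hy => ?_, by linarith⟩
  by_contra hfy
  have h1 := hfs (((c + 1) / f y) • y) (p.smul_mem _ hy)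
  rw [map_smul, smul_eq_mul, div_mul_cancel₀ _ hfy] at h1
  linarith

end auxlemmas

/-- if `X` is reflexive, a sequence in `X ∩_j Y` converges weakly to `x` iff
it is bounded in `X` and `j xₙ ⇀ j x` weakly in `Y`. -/
theorem stmt_10 {X Y Z : Type*} [NormedAddCommGroup X] [NormedSpace ℝ X] [CompleteSpace X]
    [NormedAddCommGroup Y] [NormedSpace ℝ Y] [CompleteSpace Y]
    [AddCommGroup Z] [Module ℝ Z] [TopologicalSpace Z] [T2Space Z]
    [IsTopologicalAddGroup Z] [ContinuousSMul ℝ Z]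
    (eX : X →L[ℝ] Z) (eY : Y →L[ℝ] Z)
    (heX : Function.Injective eX) (heY : Function.Injective eY)
    (hXrefl : IsReflexiveSpace X)
    (u : ℕ → ↥(pbInter eX eY)) (x : ↥(pbInter eX eY)) :
    WeakConv u x ↔
      ((∃ M : ℝ, ∀ n, ‖((u n : X × Y)).1‖ ≤ M) ∧
       WeakConv (fun n => ((u n : X × Y)).2) ((x : X × Y)).2) := by
  constructor
  · intro h
    constructor
    · obtain ⟨M, hM⟩ := weakconv_bounded' h
      refine ⟨M, fun n => ?_⟩
      calc ‖((u n : X × Y)).1‖ ≤ ‖(u n : X × Y)‖ := norm_fst_le _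
        _ = ‖u n‖ := (Submodule.coe_norm _).symm
        _ ≤ M := hM n
    · intro g
      exact h (g.comp ((ContinuousLinearMap.snd ℝ X Y).comp (pbInter eX eY).subtypeL))
  · rintro ⟨⟨M, hM⟩, h2⟩
    intro f
    by_contra hcon
    rw [Metric.tendsto_atTop] at hcon
    push_neg at hcon
    obtain ⟨ε, hε, hfreq⟩ := hcon
    set L : Filter ℕ := atTop ⊓ Filter.principal {n | ε ≤ dist (f (u n)) (f x)} with hL
    haveI hLne : L.NeBot := by
      rw [← Filter.frequently_iff_neBot]
      exact Filter.frequently_atTop.mpr hfreq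
    have hLle : L ≤ atTop := inf_le_left
    -- Hahn-Banach extension of f to X × Y
    obtain ⟨F, hF, -⟩ := exists_extension_norm_eq (pbInter eX eY) f
    have hsplit : ∀ q : X × Y, F q = F.comp (ContinuousLinearMap.inl ℝ X Y) q.1
        + F.comp (ContinuousLinearMap.inr ℝ X Y) q.2 := by
      intro q
      have hq : ((q.1, (0:Y)) : X × Y) + ((0:X), q.2) = q := by simp
      rw [ContinuousLinearMap.comp_apply, ContinuousLinearMap.comp_apply,
        ContinuousLinearMap.inl_apply, ContinuousLinearMap.inr_apply, ← map_add, hq]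
    -- weak-* cluster point of the first components in the double dual
    set v : ℕ → WeakDual ℝ (StrongDual ℝ X) := fun n =>
      StrongDual.toWeakDual (NormedSpace.inclusionInDoubleDual ℝ X ((u n : X × Y)).1)
      with hv
    have hvK : ∀ n, v n ∈ WeakDual.toStrongDual ⁻¹' Metric.closedBall 0 M := by
      intro n
      simp only [Set.mem_preimage, Metric.mem_closedBall, dist_zero_right]
      have : ‖NormedSpace.inclusionInDoubleDual ℝ X ((u n : X × Y)).1‖ = ‖((u n : X × Y)).1‖ :=
        (NormedSpace.inclusionInDoubleDualLi ℝ (E := X)).norm_map _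
      rw [show (WeakDual.toStrongDual (v n) : StrongDual ℝ (StrongDual ℝ X))
        = NormedSpace.inclusionInDoubleDual ℝ X ((u n : X × Y)).1 from rfl]
      refine (dist_zero_right (NormedSpace.inclusionInDoubleDual ℝ X ((u n : X × Y)).1)).le.trans ?_
      rw [this]
      exact hM n
    obtain ⟨φs, -, hclus⟩ := (WeakDual.isCompact_closedBall (0 : StrongDual ℝ
        (StrongDual ℝ X)) M).exists_mapClusterPt (f := L) (u := v)
      (Filter.tendsto_principal.mpr (Filter.Eventually.of_forall hvK))
    obtain ⟨w, hw⟩ := hXrefl (WeakDual.toStrongDual φs)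
    have key : ∀ g : StrongDual ℝ X,
        MapClusterPt (g w) L (fun n => g ((u n : X × Y)).1) := by
      intro g
      have hc := hclus.continuousAt_comp
        (f := fun z : WeakDual ℝ (StrongDual ℝ X) => z g)
        ((WeakDual.eval_continuous g).continuousAt)
      have hφs : φs g = g w := by
        have h1 : NormedSpace.inclusionInDoubleDual ℝ X w g = g w := rfl
        rw [← h1, hw]; rfl
      have hc' : MapClusterPt (φs g) L (fun n => g ((u n : X × Y)).1) := hc
      rwa [hφs] at hc'
    -- the limit pair (w, x.2) belongs to the intersection
    have hpclosed : IsClosed ((pbInter eX eY : Submodule ℝ (X × Y)) : Set (X × Y)) :=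
      isClosed_eq (eX.continuous.comp continuous_fst) (eY.continuous.comp continuous_snd)
    have hwx : ((w, ((x : X × Y)).2) : X × Y) ∈ pbInter eX eY := by
      by_contra hnot
      obtain ⟨F₁, hF₁0, hF₁ne⟩ := submodule_separation (pbInter eX eY) hpclosed hnot
      have hψ : Tendsto (fun n => F₁.comp (ContinuousLinearMap.inr ℝ X Y) ((u n : X × Y)).2)
          L (nhds (F₁.comp (ContinuousLinearMap.inr ℝ X Y) ((x : X × Y)).2)) :=
        (h2 (F₁.comp (ContinuousLinearMap.inr ℝ X Y))).mono_left hLle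
      have hk := mapClusterPt_add_tendsto (key (F₁.comp (ContinuousLinearMap.inl ℝ X Y))) hψ
      have hzero : (fun n => F₁.comp (ContinuousLinearMap.inl ℝ X Y) ((u n : X × Y)).1
          + F₁.comp (ContinuousLinearMap.inr ℝ X Y) ((u n : X × Y)).2) = fun _ => (0:ℝ) := by
        funext n
        have hs : ∀ q : X × Y, F₁ q = F₁.comp (ContinuousLinearMap.inl ℝ X Y) q.1
            + F₁.comp (ContinuousLinearMap.inr ℝ X Y) q.2 := by
          intro q
          have hq : ((q.1, (0:Y)) : X × Y) + ((0:X), q.2) = q := by simp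
          rw [ContinuousLinearMap.comp_apply, ContinuousLinearMap.comp_apply,
            ContinuousLinearMap.inl_apply, ContinuousLinearMap.inr_apply, ← map_add, hq]
        rw [← hs, hF₁0 _ (u n).property]
      rw [hzero] at hk
      have heq := mapClusterPt_unique hk (tendsto_const_nhds)
      apply hF₁ne
      have hsF₁ : F₁ ((w, ((x : X × Y)).2) : X × Y)
          = F₁.comp (ContinuousLinearMap.inl ℝ X Y) w
          + F₁.comp (ContinuousLinearMap.inr ℝ X Y) ((x : X × Y)).2 := by
        have hq : ((w, (0:Y)) : X × Y) + ((0:X), ((x : X × Y)).2) = (w, ((x : X × Y)).2) := by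
          simp
        rw [ContinuousLinearMap.comp_apply, ContinuousLinearMap.comp_apply,
          ContinuousLinearMap.inl_apply, ContinuousLinearMap.inr_apply, ← map_add, hq]
      rw [hsF₁, heq]
    -- hence w = x.1
    have hwmem : eX w = eY ((x : X × Y)).2 := hwx
    have hxmem : eX ((x : X × Y)).1 = eY ((x : X × Y)).2 := x.property
    have hw1 : w = ((x : X × Y)).1 := heX (by rw [hwmem, hxmem])
    -- conclude: f (u n) clusters at f x along L
    have hψ : Tendsto (fun n => F.comp (ContinuousLinearMap.inr ℝ X Y) ((u n : X × Y)).2)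
        L (nhds (F.comp (ContinuousLinearMap.inr ℝ X Y) ((x : X × Y)).2)) :=
      (h2 (F.comp (ContinuousLinearMap.inr ℝ X Y))).mono_left hLle
    have hfin := mapClusterPt_add_tendsto (key (F.comp (ContinuousLinearMap.inl ℝ X Y))) hψ
    have hfun : (fun n => F.comp (ContinuousLinearMap.inl ℝ X Y) ((u n : X × Y)).1
        + F.comp (ContinuousLinearMap.inr ℝ X Y) ((u n : X × Y)).2) = fun n => f (u n) := by
      funext n; rw [← hsplit, hF]
    have hval : F.comp (ContinuousLinearMap.inl ℝ X Y) w
        + F.comp (ContinuousLinearMap.inr ℝ X Y) ((x : X × Y)).2 = f x := by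
      rw [hw1, ← hsplit]
      exact hF x
    rw [hfun, hval] at hfin
    have hfar : ∀ᶠ n in L, ε ≤ dist (f (u n)) (f x) :=
      Filter.eventually_inf_principal.mpr (Filter.Eventually.of_forall fun n hn => hn)
    have hnear := (mapClusterPt_iff_frequently.mp hfin) (Metric.ball (f x) ε) (Metric.ball_mem_nhds _ hε)
    obtain ⟨n, hn1, hn2⟩ := (hnear.and_eventually hfar).exists
    rw [Metric.mem_ball] at hn1
    linarith
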